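/- Let r ≥ 1, let A = (a_{i,j}) be an r×r generalised Cartan matrix, and let F be a linearly ordered field. For every tuple (s_1,…,s_r) of positive elements of F there exists a unique map f : {1,…,r} × ℤ → F such that f(i,m) > 0 for all (i,m), f satisfies the frieze relation f(i,m)·f(i,m+1) = 1 + (∏_{j=i+1}^{r} f(j,m)^{-a_{j,i}})·(∏_{j=1}^{i-1} f(j,m+1)^{-a_{j,i}}) for all (i,m), and f(i,0) = s_i for all i ∈ {1,…,r}. -/

import Mathlib

section Frieze

variable {r : ℕ} {F : Type*} [Field F] [LinearOrder F] [IsStrictOrderedRing F]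

/-- exponent -/
def Ee (A : Matrix (Fin r) (Fin r) ℤ) (j i : Fin r) : ℕ := (-(A j i)).toNat

/-- next column from current column -/
def stepF (A : Matrix (Fin r) (Fin r) ℤ) (c : Fin r → F) (i : Fin r) : F :=
  (1 + (∏ j ∈ Finset.univ.filter (fun j => i < j), c j ^ Ee A j i) *
    (∏ j ∈ (Finset.univ.filter (fun j => j < i)).attach, stepF A c j.1 ^ Ee A j.1 i)) / c i
termination_by i.val
decreasing_by
  have := j.2
  simp only [Finset.mem_filter] at this
  exact this.2

/-- previous column from current column -/
def stepB (A : Matrix (Fin r) (Fin r) ℤ) (c : Fin r → F) (i : Fin r) : F :=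
  (1 + (∏ j ∈ (Finset.univ.filter (fun j => i < j)).attach, stepB A c j.1 ^ Ee A j.1 i) *
    (∏ j ∈ Finset.univ.filter (fun j => j < i), c j ^ Ee A j i)) / c i
termination_by r - i.val
decreasing_by
  have := j.2
  simp only [Finset.mem_filter] at this
  have h1 : i.val < j.1.val := this.2
  have h2 : j.1.val < r := j.1.isLt
  omega

lemma stepF_def (A : Matrix (Fin r) (Fin r) ℤ) (c : Fin r → F) (i : Fin r) :
    stepF A c i =
    (1 + (∏ j ∈ Finset.univ.filter (fun j => i < j), c j ^ Ee A j i) *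
      (∏ j ∈ Finset.univ.filter (fun j => j < i), stepF A c j ^ Ee A j i)) / c i := by
  rw [stepF, Finset.prod_attach _ (fun j => stepF A c j ^ Ee A j i)]

lemma stepB_def (A : Matrix (Fin r) (Fin r) ℤ) (c : Fin r → F) (i : Fin r) :
    stepB A c i =
    (1 + (∏ j ∈ Finset.univ.filter (fun j => i < j), stepB A c j ^ Ee A j i) *
      (∏ j ∈ Finset.univ.filter (fun j => j < i), c j ^ Ee A j i)) / c i := by
  rw [stepB, Finset.prod_attach _ (fun j => stepB A c j ^ Ee A j i)]

lemma finStrong {P : Fin r → Prop} (h : ∀ i, (∀ j, j < i → P j) → P i) : ∀ i, P i := by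
  have key : ∀ n, ∀ i : Fin r, i.val ≤ n → P i := by
    intro n
    induction n with
    | zero =>
      intro i hi
      apply h
      intro j hj
      exact absurd (Fin.lt_def.mp hj) (by omega)
    | succ n ih =>
      intro i hi
      apply h
      intro j hj
      exact ih j (by have := Fin.lt_def.mp hj; omega)
  exact fun i => key i.val i le_rfl

lemma finStrongDesc {P : Fin r → Prop} (h : ∀ i, (∀ j, i < j → P j) → P i) : ∀ i, P i := by
  have key : ∀ n, ∀ i : Fin r, r - i.val ≤ n + 1 → P i := by
    intro n
    induction n with
    | zero =>
      intro i hi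
      apply h
      intro j hj
      have h1 := Fin.lt_def.mp hj
      have h2 := j.isLt
      have h3 := i.isLt
      omega
    | succ n ih =>
      intro i hi
      apply h
      intro j hj
      exact ih j (by have := Fin.lt_def.mp hj; omega)
  exact fun i => key r i (by have := i.isLt; omega)

lemma stepF_pos (A : Matrix (Fin r) (Fin r) ℤ) {c : Fin r → F} (hc : ∀ j, 0 < c j) :
    ∀ i, 0 < stepF A c i := by
  apply finStrong
  intro i ih
  rw [stepF_def]
  apply div_pos _ (hc i)
  have h1 : 0 < ∏ j ∈ Finset.univ.filter (fun j => i < j), c j ^ Ee A j i :=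
    Finset.prod_pos fun j _ => pow_pos (hc j) _
  have h2 : 0 < ∏ j ∈ Finset.univ.filter (fun j => j < i), stepF A c j ^ Ee A j i :=
    Finset.prod_pos fun j hj => pow_pos (ih j (Finset.mem_filter.mp hj).2) _
  positivity

lemma stepB_pos (A : Matrix (Fin r) (Fin r) ℤ) {c : Fin r → F} (hc : ∀ j, 0 < c j) :
    ∀ i, 0 < stepB A c i := by
  apply finStrongDesc
  intro i ih
  rw [stepB_def]
  apply div_pos _ (hc i)
  have h1 : 0 < ∏ j ∈ Finset.univ.filter (fun j => i < j), stepB A c j ^ Ee A j i :=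
    Finset.prod_pos fun j hj => pow_pos (ih j (Finset.mem_filter.mp hj).2) _
  have h2 : 0 < ∏ j ∈ Finset.univ.filter (fun j => j < i), c j ^ Ee A j i :=
    Finset.prod_pos fun j _ => pow_pos (hc j) _
  positivity

lemma stepF_rel (A : Matrix (Fin r) (Fin r) ℤ) {c : Fin r → F} (hc : ∀ j, 0 < c j) (i : Fin r) :
    c i * stepF A c i =
      1 + (∏ j ∈ Finset.univ.filter (fun j => i < j), c j ^ Ee A j i) *
        (∏ j ∈ Finset.univ.filter (fun j => j < i), stepF A c j ^ Ee A j i) := by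
  rw [stepF_def, mul_div_cancel₀ _ (hc i).ne']

lemma stepB_rel (A : Matrix (Fin r) (Fin r) ℤ) {c : Fin r → F} (hc : ∀ j, 0 < c j) (i : Fin r) :
    stepB A c i * c i =
      1 + (∏ j ∈ Finset.univ.filter (fun j => i < j), stepB A c j ^ Ee A j i) *
        (∏ j ∈ Finset.univ.filter (fun j => j < i), c j ^ Ee A j i) := by
  rw [stepB_def, div_mul_cancel₀ _ (hc i).ne']

lemma stepF_unique (A : Matrix (Fin r) (Fin r) ℤ) {c d : Fin r → F} (hc : ∀ j, 0 < c j)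
    (hd : ∀ i, c i * d i =
      1 + (∏ j ∈ Finset.univ.filter (fun j => i < j), c j ^ Ee A j i) *
        (∏ j ∈ Finset.univ.filter (fun j => j < i), d j ^ Ee A j i)) :
    ∀ i, d i = stepF A c i := by
  apply finStrong
  intro i ih
  have h := hd i
  rw [stepF_def]
  have hprod : (∏ j ∈ Finset.univ.filter (fun j => j < i), d j ^ Ee A j i) =
      ∏ j ∈ Finset.univ.filter (fun j => j < i), stepF A c j ^ Ee A j i :=
    Finset.prod_congr rfl fun j hj => by rw [ih j (Finset.mem_filter.mp hj).2]
  rw [hprod] at h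
  rw [eq_div_iff (hc i).ne', mul_comm]
  exact h

lemma stepB_unique (A : Matrix (Fin r) (Fin r) ℤ) {c d : Fin r → F} (hc : ∀ j, 0 < c j)
    (hd : ∀ i, d i * c i =
      1 + (∏ j ∈ Finset.univ.filter (fun j => i < j), d j ^ Ee A j i) *
        (∏ j ∈ Finset.univ.filter (fun j => j < i), c j ^ Ee A j i)) :
    ∀ i, d i = stepB A c i := by
  apply finStrongDesc
  intro i ih
  have h := hd i
  rw [stepB_def]
  have hprod : (∏ j ∈ Finset.univ.filter (fun j => i < j), d j ^ Ee A j i) =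
      ∏ j ∈ Finset.univ.filter (fun j => i < j), stepB A c j ^ Ee A j i :=
    Finset.prod_congr rfl fun j hj => by rw [ih j (Finset.mem_filter.mp hj).2]
  rw [hprod] at h
  rw [eq_div_iff (hc i).ne']
  exact h

/-- the columns of the canonical frieze -/
def colZ (A : Matrix (Fin r) (Fin r) ℤ) (s : Fin r → F) : ℤ → Fin r → F
  | Int.ofNat n => (stepF A)^[n] s
  | Int.negSucc n => (stepB A)^[n + 1] s

lemma colZ_pos (A : Matrix (Fin r) (Fin r) ℤ) {s : Fin r → F} (hs : ∀ i, 0 < s i) :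
    ∀ m i, 0 < colZ A s m i := by
  have hF : ∀ n : ℕ, ∀ i, 0 < ((stepF A)^[n] s) i := by
    intro n
    induction n with
    | zero => exact hs
    | succ n ih => rw [Function.iterate_succ_apply']; exact stepF_pos A ih
  have hB : ∀ n : ℕ, ∀ i, 0 < ((stepB A)^[n] s) i := by
    intro n
    induction n with
    | zero => exact hs
    | succ n ih => rw [Function.iterate_succ_apply']; exact stepB_pos A ih
  intro m i
  cases m with
  | ofNat n => exact hF n i
  | negSucc n => exact hB (n + 1) i

lemma colZ_succ_nonneg (A : Matrix (Fin r) (Fin r) ℤ) (s : Fin r → F) (n : ℕ) :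
    colZ A s ((n : ℤ) + 1) = stepF A (colZ A s n) := by
  show colZ A s (Int.ofNat (n + 1)) = stepF A (colZ A s (Int.ofNat n))
  simp [colZ, Function.iterate_succ_apply']

lemma colZ_neg (A : Matrix (Fin r) (Fin r) ℤ) (s : Fin r → F) (n : ℕ) :
    colZ A s (Int.negSucc n) = stepB A (colZ A s (Int.negSucc n + 1)) := by
  cases n with
  | zero => simp [colZ]
  | succ n =>
    have : Int.negSucc (n + 1) + 1 = Int.negSucc n := by rw [Int.negSucc_eq, Int.negSucc_eq]; push_cast; ring
    rw [this]
    show (stepB A)^[n + 1 + 1] s = _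
    rw [Function.iterate_succ_apply']
    rfl

lemma colZ_succ_ofNat (A : Matrix (Fin r) (Fin r) ℤ) (s : Fin r → F) (n : ℕ) :
    colZ A s (Int.ofNat n + 1) = stepF A (colZ A s (Int.ofNat n)) := by
  have h : Int.ofNat n + 1 = Int.ofNat (n + 1) := rfl
  rw [h]
  simp [colZ, Function.iterate_succ_apply']

lemma colZ_rel (A : Matrix (Fin r) (Fin r) ℤ) {s : Fin r → F} (hs : ∀ i, 0 < s i)
    (m : ℤ) (i : Fin r) :
    colZ A s m i * colZ A s (m + 1) i =
      1 + (∏ j ∈ Finset.univ.filter (fun j => i < j), colZ A s m j ^ Ee A j i) *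
        (∏ j ∈ Finset.univ.filter (fun j => j < i), colZ A s (m + 1) j ^ Ee A j i) := by
  cases m with
  | ofNat n =>
    rw [colZ_succ_ofNat]
    exact stepF_rel A (colZ_pos A hs _) i
  | negSucc n =>
    rw [colZ_neg]
    exact stepB_rel A (colZ_pos A hs _) i

end Frieze

/-- An r×r generalised Cartan matrix. -/
def IsGCM {r : ℕ} (A : Matrix (Fin r) (Fin r) ℤ) : Prop :=
  (∀ i, A i i = 2) ∧ ∀ i j, i ≠ j → A i j ≤ 0 ∧ (A i j = 0 ↔ A j i = 0)

/-- For a linearly ordered field `F`, positive `F`-valued frieze patterns associated to a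
generalised Cartan matrix `A` are in bijection with `r`-tuples of positive elements of `F`. -/
theorem frieze_exists_unique {r : ℕ} (hr : 1 ≤ r) {F : Type*} [Field F] [LinearOrder F] [IsStrictOrderedRing F]
    (A : Matrix (Fin r) (Fin r) ℤ) (hA : IsGCM A)
    (s : Fin r → F) (hs : ∀ i, 0 < s i) :
    ∃! f : Fin r → ℤ → F,
      (∀ i m, 0 < f i m) ∧
      (∀ i m, f i m * f i (m + 1) =
        1 + (∏ j ∈ Finset.univ.filter (fun j => i < j), f j m ^ (-(A j i)).toNat) *
            (∏ j ∈ Finset.univ.filter (fun j => j < i), f j (m + 1) ^ (-(A j i)).toNat)) ∧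
      (∀ i, f i 0 = s i) := by
  refine ⟨fun i m => colZ A s m i, ⟨fun i m => colZ_pos A hs m i, ?_, fun i => rfl⟩, ?_⟩
  · -- relation
    intro i m
    simpa [Ee] using colZ_rel A hs m i
  · -- uniqueness
    rintro f ⟨hfpos, hfrel, hf0⟩
    have hcol : ∀ m : ℤ, (fun i => f i m) = colZ A s m := by
      have hup : ∀ n : ℕ, (fun i => f i (n : ℤ)) = colZ A s n := by
        intro n
        induction n with
        | zero => funext i; exact hf0 i
        | succ n ih =>
          have h1 : ∀ i, f i ((n : ℤ) + 1) = stepF A (fun j => f j (n : ℤ)) i :=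
            stepF_unique A (fun j => hfpos j _) (fun i => hfrel i n)
          funext i
          push_cast
          rw [h1 i, ih, ← colZ_succ_nonneg]
      have hdown : ∀ n : ℕ, (fun i => f i (Int.negSucc n)) = colZ A s (Int.negSucc n) := by
        intro n
        induction n with
        | zero =>
          have h1 : ∀ i, f i (Int.negSucc 0) = stepB A (fun j => f j 0) i := by
            apply stepB_unique A (fun j => hfpos j _)
            intro i
            have := hfrel i (Int.negSucc 0)
            simpa [Ee] using this
          funext i
          rw [h1 i]
          have : (fun j => f j (0 : ℤ)) = colZ A s (Int.negSucc 0 + 1) := by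
            funext j; rw [hf0 j]; rfl
          rw [this, ← colZ_neg]
        | succ n ih =>
          have h1 : ∀ i, f i (Int.negSucc (n + 1)) = stepB A (fun j => f j (Int.negSucc n)) i := by
            apply stepB_unique A (fun j => hfpos j _)
            intro i
            have := hfrel i (Int.negSucc (n + 1))
            have he : Int.negSucc (n + 1) + 1 = Int.negSucc n := by rw [Int.negSucc_eq, Int.negSucc_eq]; push_cast; ring
            rw [he] at this
            exact this
          funext i
          rw [h1 i, ih]
          have he : Int.negSucc (n + 1) + 1 = Int.negSucc n := by rw [Int.negSucc_eq, Int.negSucc_eq]; push_cast; ring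
          rw [← he] at *
          rw [← colZ_neg]
      intro m
      cases m with
      | ofNat n => exact hup n
      | negSucc n => exact hdown n
    funext i m
    exact congrFun (hcol m) i
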